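/- Let X be a real Banach space, Y a real Banach space, and Z a real normed space. Let T : X → Y be an injective continuous linear map and ι : X → Z a compact continuous linear map, and suppose there is a constant C₁ > 0 such that ‖v‖_X ≤ C₁(‖T v‖_Y + ‖ι v‖_Z) for all v ∈ X. Suppose furthermore that there is a subset D ⊆ Y that is dense in Y and contained in the range of T. Then T is bijective with continuous inverse: there is a continuous linear map S : Y → X with S ∘ T = id_X and T ∘ S = id_Y. -/

import Mathlib

/-- Let `T : X → Y` be an injective continuous linear map between real Banach
spaces, `ι : X → Z` a compact continuous linear map into a real normed space, with the
estimate `‖v‖ ≤ C₁ (‖T v‖ + ‖ι v‖)` for all `v` (`C₁ > 0`). If there is a dense subset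
`D ⊆ Y` contained in the range of `T`, then `T` is bijective with a continuous linear
inverse. -/
theorem stmt_2 {X Y Z : Type*}
    [NormedAddCommGroup X] [NormedSpace ℝ X] [CompleteSpace X]
    [NormedAddCommGroup Y] [NormedSpace ℝ Y] [CompleteSpace Y]
    [NormedAddCommGroup Z] [NormedSpace ℝ Z]
    (T : X →L[ℝ] Y) (hT : Function.Injective T)
    (ι : X →L[ℝ] Z)
    (hι : ∀ s : Set X, Bornology.IsBounded s → IsCompact (closure (ι '' s)))
    (C₁ : ℝ) (hC₁ : 0 < C₁)
    (hest : ∀ v : X, ‖v‖ ≤ C₁ * (‖T v‖ + ‖ι v‖))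
    (D : Set Y) (hD : Dense D) (hDr : D ⊆ Set.range T) :
    Function.Bijective T ∧
      ∃ S : Y →L[ℝ] X, (∀ x : X, S (T x) = x) ∧ (∀ y : Y, T (S y) = y) := by
  -- Step 1: the key lower bound `‖v‖ ≤ C * ‖T v‖`.
  have key : ∃ C : ℝ, 0 < C ∧ ∀ v : X, ‖v‖ ≤ C * ‖T v‖ := by
    by_contra hcon
    push_neg at hcon
    have hv : ∀ n : ℕ, ∃ v : X, (n + 1 : ℝ) * ‖T v‖ < ‖v‖ := by
      intro n
      obtain ⟨v, hv⟩ := hcon (n + 1) (by positivity)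
      exact ⟨v, by linarith⟩
    choose v hvlt using hv
    have hvne : ∀ n, v n ≠ 0 := by
      intro n h
      have := hvlt n
      rw [h] at this
      simp at this
    set u : ℕ → X := fun n => ‖v n‖⁻¹ • v n with hu
    have hun : ∀ n, ‖u n‖ = 1 := by
      intro n
      have : ‖v n‖ ≠ 0 := norm_ne_zero_iff.mpr (hvne n)
      simp [hu, norm_smul, abs_of_nonneg (inv_nonneg.mpr (norm_nonneg _)),
        inv_mul_cancel₀ this]
    have hTu : ∀ n, ‖T (u n)‖ ≤ 1 / (n + 1 : ℝ) := by
      intro n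
      have hvpos : 0 < ‖v n‖ := norm_pos_iff.mpr (hvne n)
      have hnpos : (0:ℝ) < n + 1 := by positivity
      have h1 : ‖T (u n)‖ = ‖v n‖⁻¹ * ‖T (v n)‖ := by
        simp [hu, norm_smul, abs_of_nonneg (inv_nonneg.mpr (norm_nonneg _))]
      have h2 : ‖T (v n)‖ ≤ ‖v n‖ / (n + 1) := by
        rw [le_div_iff₀ hnpos]
        nlinarith [hvlt n]
      rw [h1]
      calc ‖v n‖⁻¹ * ‖T (v n)‖ ≤ ‖v n‖⁻¹ * (‖v n‖ / (n + 1)) := by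
            exact mul_le_mul_of_nonneg_left h2 (inv_nonneg.mpr (norm_nonneg _))
        _ = 1 / (n + 1) := by field_simp
    have hbd : Bornology.IsBounded (Set.range u) := by
      apply Bornology.IsBounded.subset (Metric.isBounded_closedBall (x := (0:X)) (r := 1))
      rintro _ ⟨n, rfl⟩
      simp [Metric.mem_closedBall, dist_eq_norm, hun n]
    have hK : IsCompact (closure (ι '' Set.range u)) := hι _ hbd
    have hmem : ∀ n, ι (u n) ∈ closure (ι '' Set.range u) := fun n =>
      subset_closure ⟨u n, ⟨n, rfl⟩, rfl⟩
    obtain ⟨z, _, φ, hφ, hconv⟩ := hK.tendsto_subseq hmem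
    set w : ℕ → X := u ∘ φ with hw
    have hcι : CauchySeq (fun n => ι (w n)) := hconv.cauchySeq
    have hT0 : Filter.Tendsto (fun n => T (w n)) Filter.atTop (nhds 0) := by
      have hb : ∀ n, ‖T (w n)‖ ≤ 1 / (n + 1 : ℝ) := by
        intro n
        refine (hTu (φ n)).trans ?_
        have hφn : (n:ℝ) ≤ φ n := Nat.cast_le.mpr hφ.le_apply
        apply one_div_le_one_div_of_le (by positivity)
        linarith
      have ht : Filter.Tendsto (fun n : ℕ => 1 / (n + 1 : ℝ)) Filter.atTop (nhds 0) :=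
        tendsto_one_div_add_atTop_nhds_zero_nat
      rw [tendsto_zero_iff_norm_tendsto_zero]
      exact squeeze_zero (fun n => norm_nonneg _) hb ht
    have hcT : CauchySeq (fun n => T (w n)) := hT0.cauchySeq
    have hcw : CauchySeq w := by
      rw [Metric.cauchySeq_iff]
      intro ε hε
      have hε' : 0 < ε / (2 * C₁) := by positivity
      obtain ⟨N1, hN1⟩ := Metric.cauchySeq_iff.mp hcT (ε / (2 * C₁)) hε'
      obtain ⟨N2, hN2⟩ := Metric.cauchySeq_iff.mp hcι (ε / (2 * C₁)) hε'
      refine ⟨max N1 N2, fun m hm n hn => ?_⟩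
      have h1 := hN1 m (le_trans (le_max_left _ _) hm) n (le_trans (le_max_left _ _) hn)
      have h2 := hN2 m (le_trans (le_max_right _ _) hm) n (le_trans (le_max_right _ _) hn)
      rw [dist_eq_norm] at h1 h2 ⊢
      have := hest (w m - w n)
      rw [map_sub, map_sub] at this
      calc ‖w m - w n‖ ≤ C₁ * (‖T (w m) - T (w n)‖ + ‖ι (w m) - ι (w n)‖) := this
        _ < C₁ * (ε / (2 * C₁) + ε / (2 * C₁)) := by
            apply mul_lt_mul_of_pos_left _ hC₁
            linarith
        _ = ε := by field_simp; ring
    obtain ⟨x0, hx0⟩ := cauchySeq_tendsto_of_complete hcw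
    have hTx0 : T x0 = 0 := by
      have h1 : Filter.Tendsto (fun n => T (w n)) Filter.atTop (nhds (T x0)) :=
        (T.continuous.tendsto x0).comp hx0
      exact tendsto_nhds_unique h1 hT0
    have hx00 : x0 = 0 := hT (by simp [hTx0])
    have : ‖x0‖ = 1 := by
      have h1 : Filter.Tendsto (fun n => ‖w n‖) Filter.atTop (nhds ‖x0‖) :=
        (continuous_norm.tendsto x0).comp hx0
      have h2 : (fun n => ‖w n‖) = fun _ => (1:ℝ) := funext fun n => hun (φ n)
      rw [h2] at h1
      exact tendsto_nhds_unique h1 tendsto_const_nhds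
    rw [hx00] at this
    simp at this
  obtain ⟨C, hC, hCb⟩ := key
  -- Step 2: T is antilipschitz, hence has closed range.
  have anti : AntilipschitzWith ⟨C, hC.le⟩ T :=
    ContinuousLinearMap.antilipschitz_of_bound T hCb
  have hclosed : IsClosed (Set.range T) := anti.isClosed_range T.uniformContinuous
  -- Step 3: range is dense, hence all of Y.
  have hdense : Dense (Set.range (T : X → Y)) := hD.mono hDr
  have hrange : Set.range (T : X → Y) = Set.univ := by
    rw [← hclosed.closure_eq]
    exact hdense.closure_eq
  have hsurj : Function.Surjective T := fun y => by
    have : y ∈ Set.range (T : X → Y) := hrange ▸ Set.mem_univ y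
    exact this
  refine ⟨⟨hT, hsurj⟩, ?_⟩
  have hker : LinearMap.ker T = ⊥ := LinearMap.ker_eq_bot.mpr (by exact hT)
  have hrg : LinearMap.range T = ⊤ := LinearMap.range_eq_top.mpr (by exact hsurj)
  let e := ContinuousLinearEquiv.ofBijective T hker hrg
  refine ⟨e.symm.toContinuousLinearMap, fun x => ?_, fun y => ?_⟩
  · have : e x = T x := rfl
    simp [← this]
  · have : (e (e.symm y) : Y) = T (e.symm y) := rfl
    simp [← this]
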